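/- Let (σ_ℓ)_{ℓ≥1} be a GPAS variance sequence with gate parameters (α_ℓ) and scaling factors β_ℓ = 1 − SiLU(α_ℓ) > 0, and define S_ℓ := ∑_{k=1}^{ℓ−1} ( 1/(σ_k + 1) + log β_k ). Then for every ℓ ≥ 1, the reciprocal bounds hold: 1/σ_ℓ ≤ (1/σ_1) · exp(−S_ℓ/2) and 1/σ_ℓ² ≤ (1/σ_1²) · exp(−S_ℓ). -/

import Mathlib

/-- The Sigmoid Linear Unit: `SiLU x = x / (1 + exp (−x))`. -/
noncomputable def SiLU (x : ℝ) : ℝ := x / (1 + Real.exp (-x))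

/-- For a GPAS variance sequence `σ` (here `σ 0 = σ_1`, `σ k = σ_{k+1}`) with
gate parameters `α`, scaling factors `β ℓ = 1 − SiLU (α ℓ) > 0` and
`S_ℓ = ∑_{k=1}^{ℓ−1} (1/(σ_k + 1) + log β_k)`, the reciprocal bounds hold for every layer:
`1/σ_ℓ ≤ (1/σ_1) exp (−S_ℓ/2)` and `1/σ_ℓ² ≤ (1/σ_1²) exp (−S_ℓ)`. -/
theorem gpas_reciprocal_upper_bounds
    (σ α : ℕ → ℝ)
    (hσ : ∀ ℓ, 0 < σ ℓ)
    (hβ : ∀ ℓ, 0 < 1 - SiLU (α ℓ))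
    (hrec : ∀ ℓ, (σ (ℓ + 1)) ^ 2 = (σ ℓ) ^ 2 * (1 + 1 / σ ℓ) * (1 - SiLU (α ℓ)))
    (S : ℕ → ℝ)
    (hS : ∀ ℓ, S ℓ = ∑ k ∈ Finset.range ℓ,
      (1 / (σ k + 1) + Real.log (1 - SiLU (α k)))) :
    ∀ ℓ : ℕ,
      1 / σ ℓ ≤ (1 / σ 0) * Real.exp (-(S ℓ) / 2) ∧
        1 / (σ ℓ) ^ 2 ≤ (1 / (σ 0) ^ 2) * Real.exp (-(S ℓ)) := by
  -- key lower bound on the variance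
  have key : ∀ ℓ, (σ 0) ^ 2 * Real.exp (S ℓ) ≤ (σ ℓ) ^ 2 := by
    intro ℓ
    induction ℓ with
    | zero => simp [hS]
    | succ n ih =>
      have hβn := hβ n
      have hσn := hσ n
      have hSs : S (n + 1) = S n + (1 / (σ n + 1) + Real.log (1 - SiLU (α n))) := by
        rw [hS, hS, Finset.sum_range_succ]
      -- exp (1/(σ n + 1)) ≤ 1 + 1/σ n
      have h1 : Real.exp (1 / (σ n + 1)) ≤ 1 + 1 / σ n := by
        have hx : (0 : ℝ) < 1 + 1 / σ n := by positivity
        have hlog := Real.one_sub_inv_le_log_of_pos hx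
        have hinv : 1 - (1 + 1 / σ n)⁻¹ = 1 / (σ n + 1) := by
          rw [eq_div_iff (by positivity)]
          field_simp
          ring
        rw [hinv] at hlog
        calc Real.exp (1 / (σ n + 1)) ≤ Real.exp (Real.log (1 + 1 / σ n)) :=
              Real.exp_le_exp.2 hlog
          _ = 1 + 1 / σ n := Real.exp_log hx
      have h2 : Real.exp (Real.log (1 - SiLU (α n))) = 1 - SiLU (α n) := Real.exp_log hβn
      rw [hrec n, hSs, Real.exp_add, Real.exp_add, h2]
      have hσn2 : (0:ℝ) ≤ (σ n)^2 := by positivity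
      calc (σ 0)^2 * (Real.exp (S n) * (Real.exp (1 / (σ n + 1)) * (1 - SiLU (α n))))
          = ((σ 0)^2 * Real.exp (S n)) * Real.exp (1 / (σ n + 1)) * (1 - SiLU (α n)) := by ring
        _ ≤ (σ n)^2 * (1 + 1 / σ n) * (1 - SiLU (α n)) := by
            apply mul_le_mul_of_nonneg_right _ hβn.le
            exact mul_le_mul ih h1 (Real.exp_pos _).le hσn2
  intro ℓ
  have hσℓ := hσ ℓ
  have hσ0 := hσ 0
  have hk := key ℓ
  have hpos : (0:ℝ) < (σ 0) ^ 2 * Real.exp (S ℓ) := by positivity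
  have h2 : 1 / (σ ℓ) ^ 2 ≤ (1 / (σ 0) ^ 2) * Real.exp (-(S ℓ)) := by
    have h := one_div_le_one_div_of_le hpos hk
    calc 1 / (σ ℓ) ^ 2 ≤ 1 / ((σ 0) ^ 2 * Real.exp (S ℓ)) := h
      _ = (1 / (σ 0) ^ 2) * Real.exp (-(S ℓ)) := by
          rw [Real.exp_neg]; field_simp
  refine ⟨?_, h2⟩
  have hb : (0:ℝ) ≤ (1 / σ 0) * Real.exp (-(S ℓ) / 2) := by positivity
  have hsq : (1 / σ ℓ) ^ 2 ≤ ((1 / σ 0) * Real.exp (-(S ℓ) / 2)) ^ 2 := by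
    have heq : ((1 / σ 0) * Real.exp (-(S ℓ) / 2)) ^ 2
        = (1 / (σ 0) ^ 2) * Real.exp (-(S ℓ)) := by
      rw [mul_pow, sq (Real.exp _), ← Real.exp_add, div_pow, one_pow]
      ring_nf
    rw [heq, div_pow, one_pow]
    exact h2
  exact (pow_le_pow_iff_left₀ (by positivity) hb (by norm_num)).1 hsq
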